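/- Let g = (g_1,…,g_m) be a tuple of polynomials in ℝ[X_1,…,X_n] and let C be a compact subset of S(g) such that, for each i ∈ {1,…,m}, g_i is strictly quasiconcave on C ∩ Z(g_i). Then there exists a univariate polynomial h ∈ ℝ[T] with h − 1 a sum of squares in ℝ[T] such that, setting h_i := g_i · h(g_i) ∈ ℝ[X_1,…,X_n], the matrix ∫_0^1 (Hess h_i)(u + s(x − u)) ds is negative definite for all i ∈ {1,…,m}, all u ∈ Z(g_i) and all x ∈ ℝ^n with {u + s(x − u) : 0 ≤ s ≤ 1} ⊆ C. -/

import Mathlib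

open MvPolynomial Matrix

noncomputable section

/-- `S(g) = {x ∈ ℝⁿ : g₁(x) ≥ 0, …, g_m(x) ≥ 0}`. -/
def SolSet {n m : ℕ} (g : Fin m → MvPolynomial (Fin n) ℝ) : Set (Fin n → ℝ) :=
  {x | ∀ i, 0 ≤ eval x (g i)}

/-- The real zero set `Z(p)` of a polynomial `p`. -/
def ZSet {n : ℕ} (p : MvPolynomial (Fin n) ℝ) : Set (Fin n → ℝ) :=
  {x | eval x p = 0}

/-- The gradient `∇g(x)` of a polynomial `g` at a point `x`. -/
def gradEval {n : ℕ} (g : MvPolynomial (Fin n) ℝ) (x : Fin n → ℝ) : Fin n → ℝ :=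
  fun i => eval x (pderiv i g)

/-- The Hessian `(Hess g)(x)` of a polynomial `g` at a point `x`. -/
def hessEval {n : ℕ} (g : MvPolynomial (Fin n) ℝ) (x : Fin n → ℝ) :
    Matrix (Fin n) (Fin n) ℝ :=
  Matrix.of fun i j => eval x (pderiv i (pderiv j g))

/-- `g` is strictly quasiconcave at `x`: `vᵀ (Hess g(x)) v < 0` for every `v ≠ 0`
orthogonal to `∇g(x)`. -/
def StrictlyQuasiconcaveAt {n : ℕ} (g : MvPolynomial (Fin n) ℝ) (x : Fin n → ℝ) : Prop :=
  ∀ v : Fin n → ℝ, v ≠ 0 → gradEval g x ⬝ᵥ v = 0 → v ⬝ᵥ (hessEval g x) *ᵥ v < 0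

/-- A univariate polynomial is a sum of squares. -/
def IsSOS1 (p : Polynomial ℝ) : Prop :=
  ∃ (l : ℕ) (q : Fin l → Polynomial ℝ), p = ∑ i, q i ^ 2

section Aux
set_option maxHeartbeats 1000000

/-! ### SOS closure lemmas -/

lemma isSOS1_zero : IsSOS1 0 := ⟨0, ![], by simp⟩

lemma isSOS1_sq (q : Polynomial ℝ) : IsSOS1 (q ^ 2) := ⟨1, ![q], by simp⟩

lemma isSOS1_add {p q : Polynomial ℝ} (hp : IsSOS1 p) (hq : IsSOS1 q) : IsSOS1 (p + q) := by
  obtain ⟨l1, f1, rfl⟩ := hp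
  obtain ⟨l2, f2, rfl⟩ := hq
  exact ⟨l1 + l2, Fin.append f1 f2, by
    rw [Fin.sum_univ_add]
    simp [Fin.append_left, Fin.append_right]⟩

lemma isSOS1_sq_mul (b : Polynomial ℝ) {p : Polynomial ℝ} (hp : IsSOS1 p) :
    IsSOS1 (b ^ 2 * p) := by
  obtain ⟨l, f, rfl⟩ := hp
  exact ⟨l, fun i => b * f i, by rw [Finset.mul_sum]; exact Finset.sum_congr rfl fun i _ => by ring⟩

lemma isSOS1_C_nonneg {a : ℝ} (ha : 0 ≤ a) : IsSOS1 (Polynomial.C a) := by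
  have : Polynomial.C a = (Polynomial.C (Real.sqrt a)) ^ 2 := by
    rw [← Polynomial.C_pow, Real.sq_sqrt ha]
  rw [this]; exact isSOS1_sq _

lemma isSOS1_C_mul_sq {a : ℝ} (ha : 0 ≤ a) (q : Polynomial ℝ) :
    IsSOS1 (Polynomial.C a * q ^ 2) := by
  have : Polynomial.C a * q ^ 2 = (Polynomial.C (Real.sqrt a) * q) ^ 2 := by
    rw [mul_pow, ← Polynomial.C_pow, Real.sq_sqrt ha]
  rw [this]; exact isSOS1_sq _

/-! ### the explicit polynomial family -/

def BP (K : ℝ) : Polynomial ℝ := 1 - Polynomial.C (1/K) * Polynomial.X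

lemma BP_eval (K t : ℝ) : Polynomial.eval t (BP K) = 1 - t/K := by
  simp [BP]; ring

def SP (K : ℝ) : ℕ → Polynomial ℝ
  | 0 => 0
  | (r+1) => (BP K) ^ 2 * SP K r
      + Polynomial.C (((r:ℝ)+2)/((r:ℝ)+1)) * ((BP K) + Polynomial.C (((r:ℝ)+1)/((r:ℝ)+2))) ^ 2

lemma isSOS1_SP (K : ℝ) (r : ℕ) : IsSOS1 (SP K r) := by
  induction r with
  | zero => exact isSOS1_zero
  | succ r ih =>
    exact isSOS1_add (isSOS1_sq_mul _ ih) (isSOS1_C_mul_sq (by positivity) _)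

lemma SP_eval (K : ℝ) (r : ℕ) (t : ℝ) :
    Polynomial.eval t (SP K r) + 1/((r:ℝ)+1) + 1
      = 2 * ∑ j ∈ Finset.range (2*r+1), (1 - t/K)^j := by
  induction r with
  | zero => norm_num [SP]
  | succ r ih =>
    have hsum : ∑ j ∈ Finset.range (2*(r+1)+1), (1 - t/K)^j
        = (1-t/K)^2 * (∑ j ∈ Finset.range (2*r+1), (1 - t/K)^j) + (1 - t/K) + 1 := by
      have h1 : 2*(r+1)+1 = (2*r+1) + 1 + 1 := by ring
      rw [h1, Finset.sum_range_succ', Finset.sum_range_succ']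
      have hpow : ∀ j : ℕ, (1 - t/K)^(j+1+1) = (1 - t/K)^2 * (1 - t/K)^j := fun j => by ring
      rw [Finset.sum_congr rfl fun j _ => hpow j, ← Finset.mul_sum]
      ring
    rw [hsum]
    have hr1 : ((r:ℝ)+1) ≠ 0 := by positivity
    have hr2 : ((r:ℝ)+2) ≠ 0 := by positivity
    simp only [SP, Polynomial.eval_add, Polynomial.eval_mul, Polynomial.eval_pow,
      Polynomial.eval_C, BP_eval, Nat.cast_succ]
    have hE : Polynomial.eval t (SP K r)
        = 2 * (∑ j ∈ Finset.range (2*r+1), (1 - t/K)^j) - 1/((r:ℝ)+1) - 1 := by linarith [ih]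
    rw [hE]
    field_simp
    ring

def hpol (K : ℝ) (r : ℕ) : Polynomial ℝ := 1 + Polynomial.C (1/((r:ℝ)+1)) + SP K r

lemma hpol_eval (K : ℝ) (r : ℕ) (t : ℝ) :
    Polynomial.eval t (hpol K r) = 2 * ∑ j ∈ Finset.range (2*r+1), (1 - t/K)^j := by
  rw [← SP_eval K r t]
  simp [hpol]
  ring

lemma evalXh {K : ℝ} (hK : K ≠ 0) (r : ℕ) (t : ℝ) :
    Polynomial.eval t (Polynomial.X * hpol K r) = 2*K - 2*K*(1 - t/K)^(2*r+1) := by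
  rw [Polynomial.eval_mul, Polynomial.eval_X, hpol_eval]
  have hts : t = K * (1 - (1 - t/K)) := by field_simp; ring
  rw [show t * (2 * ∑ j ∈ Finset.range (2*r+1), (1 - t/K)^j)
      = K * (1 - (1 - t/K)) * (2 * ∑ j ∈ Finset.range (2*r+1), (1 - t/K)^j) from by
    rw [← hts]]
  generalize (1 - t/K) = s
  linear_combination (-2*K) * geom_sum_mul s (2*r+1)

lemma eval_derivative_eq {p : Polynomial ℝ} {f' : ℝ → ℝ}
    (hf : ∀ t, HasDerivAt (fun t => Polynomial.eval t p) (f' t) t) (t : ℝ) :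
    Polynomial.eval t (Polynomial.derivative p) = f' t :=
  (Polynomial.hasDerivAt p t).unique (hf t)

lemma hasDerivAt_base (K : ℝ) (t : ℝ) : HasDerivAt (fun t : ℝ => 1 - t/K) (-(1/K)) t := by
  simpa using ((hasDerivAt_id t).div_const K).const_sub 1

lemma evalD1 {K : ℝ} (hK : K ≠ 0) (r : ℕ) (t : ℝ) :
    Polynomial.eval t (Polynomial.derivative (Polynomial.X * hpol K r))
      = 2*(2*(r:ℝ)+1) * (1 - t/K)^(2*r) := by
  refine eval_derivative_eq (f' := fun t => 2*(2*(r:ℝ)+1) * (1 - t/K)^(2*r)) (fun t => ?_) t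
  rw [show (fun t : ℝ => Polynomial.eval t (Polynomial.X * hpol K r))
      = fun t : ℝ => 2*K - 2*K*(1 - t/K)^(2*r+1) from funext (evalXh hK r)]
  have h1 := (((hasDerivAt_base K t).pow (2*r+1)).const_mul (2*K)).const_sub (2*K)
  refine h1.congr_deriv ?_
  push_cast
  field_simp

lemma evalD2 {K : ℝ} (hK : K ≠ 0) (r : ℕ) (hr : 1 ≤ r) (t : ℝ) :
    Polynomial.eval t (Polynomial.derivative (Polynomial.derivative (Polynomial.X * hpol K r)))
      = -(2*(2*(r:ℝ)+1)) * (2*(r:ℝ)) * (1 - t/K)^(2*r-1) / K := by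
  refine eval_derivative_eq
    (f' := fun t => -(2*(2*(r:ℝ)+1)) * (2*(r:ℝ)) * (1 - t/K)^(2*r-1) / K) (fun t => ?_) t
  rw [show (fun t : ℝ => Polynomial.eval t (Polynomial.derivative (Polynomial.X * hpol K r)))
      = fun t : ℝ => 2*(2*(r:ℝ)+1) * (1 - t/K)^(2*r) from funext (evalD1 hK r)]
  have h1 := ((hasDerivAt_base K t).pow (2*r)).const_mul (2*(2*(r:ℝ)+1))
  refine h1.congr_deriv ?_
  push_cast [Nat.cast_sub (by omega : 1 ≤ 2*r)]
  field_simp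

/-! ### numeric parameter selection -/

lemma exp_neg_le (x : ℝ) (hx0 : 0 ≤ x) (hx1 : x ≤ 1) : Real.exp (-x) ≤ 1 - x/2 := by
  have h1 : x + 1 ≤ Real.exp x := Real.add_one_le_exp x
  have hpos : (0:ℝ) < 1 + x := by linarith
  have h2 : Real.exp (-x) = 1 / Real.exp x := by rw [Real.exp_neg]; ring
  rw [h2]
  have h3 : 1 / Real.exp x ≤ 1 / (1 + x) := one_div_le_one_div_of_le hpos (by linarith)
  refine h3.trans ?_
  rw [div_le_iff₀ hpos]
  nlinarith

lemma log_le_two_sqrt {y : ℝ} (hy : 1 ≤ y) : Real.log y ≤ 2 * Real.sqrt y := by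
  have h0 : (0:ℝ) < y := by linarith
  have h1 : Real.log (Real.sqrt y) = Real.log y / 2 := Real.log_sqrt h0.le
  have h2 : Real.log (Real.sqrt y) ≤ Real.sqrt y - 1 :=
    Real.log_le_sub_one_of_pos (Real.sqrt_pos.2 h0)
  nlinarith [Real.sqrt_nonneg y]

lemma exists_params (δ c₀ η M : ℝ) (hδ : 0 < δ) (hc₀ : 0 < c₀) (hη : 0 < η) (hMδ : δ < M) :
    ∃ (r : ℕ) (K : ℝ), 1 ≤ r ∧ 0 < K ∧ M < K ∧ c₀ ≤ 2*(r:ℝ)/K ∧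
      (∀ t ∈ Set.Icc (0:ℝ) (δ/2), 1 ≤ 2*(2*(r:ℝ)+1) * (1 - t/K)^(2*r)) ∧
      (∀ t ∈ Set.Icc δ M, 2*(2*(r:ℝ)+1) * (1 - t/K)^(2*r) ≤ η) := by
  obtain ⟨r, hrbig⟩ := exists_nat_gt
    (max (max (1/η) (Real.exp (c₀*δ))) (max (25*(M+δ)^2/δ^2) 7))
  have hr5 : (7:ℝ) < r := lt_of_le_of_lt ((le_max_right _ _).trans (le_max_right _ _)) hrbig
  have hr7n : (7:ℕ) < r := by exact_mod_cast hr5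
  have hr6n : 7 ≤ r := hr7n.le
  have hr6 : (7:ℝ) ≤ r := by exact_mod_cast hr6n
  have hr1 : 1 ≤ r := by omega
  set A : ℝ := 2*(2*(r:ℝ)+1) with hA
  have hA1 : (1:ℝ) < A := by nlinarith
  have hA0 : (0:ℝ) < A := by linarith
  have hAeta : 1/η ≤ A := by
    have h1 : 1/η ≤ max (max (1/η) (Real.exp (c₀*δ))) (max (25*(M+δ)^2/δ^2) 7) :=
      le_trans (le_max_left _ _) (le_max_left _ _)
    nlinarith [h1.trans hrbig.le]
  have hAexp : Real.exp (c₀*δ) ≤ A := by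
    have h1 : Real.exp (c₀*δ) ≤ max (max (1/η) (Real.exp (c₀*δ))) (max (25*(M+δ)^2/δ^2) 7) :=
      le_trans (le_max_right _ _) (le_max_left _ _)
    nlinarith [h1.trans hrbig.le]
  have hrM : 25*(M+δ)^2/δ^2 ≤ (r:ℝ) :=
    ((le_max_left (25*(M+δ)^2/δ^2) 7).trans (le_max_right _ _)).trans hrbig.le
  have hlogA_pos : 0 < Real.log A := Real.log_pos hA1
  set x : ℝ := Real.log A / (2*(r:ℝ)) with hx
  have hr0 : (0:ℝ) < r := by linarith
  have hxpos : 0 < x := by positivity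
  have hA6r : A ≤ 6*(r:ℝ) := by nlinarith
  have hsqrt_pos : 0 < Real.sqrt (r:ℝ) := Real.sqrt_pos.2 hr0
  have hsqr : Real.sqrt (r:ℝ) * Real.sqrt (r:ℝ) = (r:ℝ) := Real.mul_self_sqrt hr0.le
  have h2sqrt6 : 2 * Real.sqrt 6 ≤ 5 := by
    nlinarith [Real.sq_sqrt (by norm_num : (0:ℝ) ≤ 6), Real.sqrt_nonneg 6]
  have hlog5 : Real.log A ≤ 5 * Real.sqrt (r:ℝ) := by
    have h1 : Real.log A ≤ 2 * Real.sqrt A := log_le_two_sqrt hA1.le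
    have h2 : Real.sqrt A ≤ Real.sqrt (6*(r:ℝ)) := Real.sqrt_le_sqrt hA6r
    have h3 : Real.sqrt (6*(r:ℝ)) = Real.sqrt 6 * Real.sqrt (r:ℝ) := Real.sqrt_mul (by norm_num) _
    nlinarith [Real.sqrt_nonneg (r:ℝ), Real.sqrt_nonneg 6]
  have hsqrt52 : (5:ℝ)/2 ≤ Real.sqrt (r:ℝ) := by
    rw [show (5:ℝ)/2 = Real.sqrt ((5/2)^2) from (Real.sqrt_sq (by norm_num)).symm]
    apply Real.sqrt_le_sqrt; nlinarith
  have hlog2r : Real.log A ≤ 2*(r:ℝ) := by nlinarith [hsqrt52, hsqr, hsqrt_pos, hlog5]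
  have hx1 : x ≤ 1 := by
    rw [hx, div_le_one (by positivity)]
    exact hlog2r
  set β : ℝ := Real.exp (-x) with hβ
  have hβ1 : β < 1 := by rw [hβ, Real.exp_lt_one_iff]; linarith
  have hβ0 : 0 < β := Real.exp_pos _
  have hβpow : β ^ (2*r) = 1/A := by
    rw [hβ, ← Real.exp_nat_mul]
    have hxx : (2*r : ℕ) * (-x) = -Real.log A := by
      rw [hx]; push_cast; field_simp
    rw [hxx, Real.exp_neg, Real.exp_log hA0, one_div]
  have h1mβpos : 0 < 1 - β := by linarith
  set K : ℝ := δ / (2*(1-β)) with hK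
  have hKpos : 0 < K := by rw [hK]; positivity
  have hKβ : 1 - δ/(2*K) = β := by rw [hK]; field_simp; ring
  have h1mβ_le : 1 - β ≤ x := by
    have := Real.add_one_le_exp (-x); rw [← hβ] at this; linarith
  have h1mβ_ge : x/2 ≤ 1 - β := by
    have := exp_neg_le x hxpos.le hx1; rw [← hβ] at this; linarith
  have hKge : δ * (r:ℝ) / Real.log A ≤ K := by
    rw [hK, div_le_div_iff₀ hlogA_pos (by positivity)]
    have h2 : 2*(1-β)*(r:ℝ) ≤ Real.log A := by
      have : 2*(1-β) ≤ 2*x := by linarith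
      have h3 : 2*x*(r:ℝ) = Real.log A := by rw [hx]; field_simp
      nlinarith
    nlinarith
  have hsr : 5*(M+δ)/δ ≤ Real.sqrt (r:ℝ) := by
    rw [show 5*(M+δ)/δ = Real.sqrt ((5*(M+δ)/δ)^2) from
      (Real.sqrt_sq (div_nonneg (by linarith) hδ.le)).symm]
    apply Real.sqrt_le_sqrt
    rw [div_pow]
    calc (5*(M+δ))^2/δ^2 = 25*(M+δ)^2/δ^2 := by ring_nf
    _ ≤ (r:ℝ) := hrM
  have hMK : M < K := by
    have h1 : M * Real.log A < δ * (r:ℝ) := by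
      have h2 : δ * Real.sqrt (r:ℝ) ≥ 5*(M+δ) := by
        rw [ge_iff_le, ← div_le_iff₀' hδ]
        exact hsr
      nlinarith [hsqrt_pos, hδ, hMδ]
    calc M = M * Real.log A / Real.log A := by field_simp
    _ < δ * (r:ℝ) / Real.log A := by gcongr
    _ ≤ K := hKge
  refine ⟨r, K, hr1, hKpos, hMK, ?_, ?_, ?_⟩
  · have h1 : 2*(r:ℝ)/K = 4*(r:ℝ)*(1-β)/δ := by
      rw [hK]; field_simp; ring
    have h2 : c₀*δ ≤ Real.log A := by
      rw [← Real.exp_le_exp, Real.exp_log hA0]; exact hAexp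
    have h3 : Real.log A = 2*x*(r:ℝ) := by rw [hx]; field_simp
    rw [h1, le_div_iff₀ hδ]
    nlinarith
  · intro t ht
    have hβle : β ≤ 1 - t/K := by
      rw [← hKβ]
      have : t/K ≤ δ/(2*K) := by
        rw [div_le_div_iff₀ hKpos (by positivity)]
        nlinarith [ht.2]
      linarith
    calc (1:ℝ) = A * (1/A) := by field_simp
    _ ≤ A * (1 - t/K)^(2*r) := by
        apply mul_le_mul_of_nonneg_left _ hA0.le
        rw [← hβpow]
        exact pow_le_pow_left₀ hβ0.le hβle _
    _ = 2*(2*(r:ℝ)+1) * (1 - t/K)^(2*r) := by rw [hA]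
  · intro t ht
    have ht0 : 0 ≤ 1 - t/K := by
      have : t/K ≤ 1 := by rw [div_le_one hKpos]; linarith [ht.2, hMK]
      linarith
    have hup : 1 - t/K ≤ β^2 := by
      have h1 : 1 - t/K ≤ 1 - δ/K := by
        have : δ/K ≤ t/K := by gcongr; exact ht.1
        linarith
      have h2 : 1 - δ/K = 2*β - 1 := by
        rw [hK]; field_simp; ring
      nlinarith [sq_nonneg (β - 1)]
    calc 2*(2*(r:ℝ)+1) * (1 - t/K)^(2*r)
        ≤ A * (β^2)^(2*r) := by
          rw [← hA]
          exact mul_le_mul_of_nonneg_left (pow_le_pow_left₀ ht0 hup _) hA0.le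
    _ = A * (1/A)^2 := by rw [← pow_mul, show 2*(2*r) = (2*r)*2 from by ring, pow_mul, hβpow]
    _ ≤ η := by
        rw [div_pow, one_pow]
        rw [show A * (1/A^2) = 1/A from by field_simp]
        rw [div_le_iff₀ hA0]
        rw [div_le_iff₀ hη] at hAeta
        linarith

/-! ### algebraic differential identities -/

lemma pderiv_paeval {n : ℕ} (g : MvPolynomial (Fin n) ℝ) (j : Fin n) (F : Polynomial ℝ) :
    MvPolynomial.pderiv j (Polynomial.aeval g F) =
      Polynomial.aeval g (Polynomial.derivative F) * MvPolynomial.pderiv j g := by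
  induction F using Polynomial.induction_on with
  | C a => simp
  | add p q hp hq => simp [hp, hq, add_mul]
  | monomial a k ih =>
    simp only [_root_.map_mul, Polynomial.aeval_C, Polynomial.aeval_X_pow, Polynomial.derivative_mul,
      Polynomial.derivative_C, Polynomial.derivative_C_mul, Polynomial.derivative_X_pow,
      zero_mul, zero_add, map_pow, Polynomial.aeval_X, map_natCast, Nat.add_sub_cancel,
      MvPolynomial.algebraMap_eq]
    rw [MvPolynomial.pderiv_C_mul, MvPolynomial.pderiv_pow]
    push_cast
    ring

lemma hess_identity {n : ℕ} (g : MvPolynomial (Fin n) ℝ) (a b : Fin n) (F : Polynomial ℝ) :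
    MvPolynomial.pderiv a (MvPolynomial.pderiv b (Polynomial.aeval g F)) =
      Polynomial.aeval g (Polynomial.derivative (Polynomial.derivative F))
          * MvPolynomial.pderiv a g * MvPolynomial.pderiv b g
        + Polynomial.aeval g (Polynomial.derivative F)
          * MvPolynomial.pderiv a (MvPolynomial.pderiv b g) := by
  rw [pderiv_paeval, MvPolynomial.pderiv_mul, pderiv_paeval]

lemma eval_paeval {n : ℕ} (y : Fin n → ℝ) (g : MvPolynomial (Fin n) ℝ) (F : Polynomial ℝ) :
    MvPolynomial.eval y (Polynomial.aeval g F) = Polynomial.eval (MvPolynomial.eval y g) F := by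
  induction F using Polynomial.induction_on with
  | C a => simp [MvPolynomial.algebraMap_eq]
  | add p q hp hq => simp [hp, hq]
  | monomial a k ih => simp [MvPolynomial.algebraMap_eq]

lemma hasDerivAt_eval_line {n : ℕ} (p : MvPolynomial (Fin n) ℝ) (u x : Fin n → ℝ) (s : ℝ) :
    HasDerivAt (fun s : ℝ => MvPolynomial.eval (fun j => u j + s * (x j - u j)) p)
      (∑ j, MvPolynomial.eval (fun j => u j + s * (x j - u j)) (MvPolynomial.pderiv j p)
        * (x j - u j)) s := by
  induction p using MvPolynomial.induction_on with
  | C a => simpa using hasDerivAt_const s a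
  | add p q hp hq =>
    have := hp.add hq
    simp only [map_add, add_mul, Finset.sum_add_distrib]
    exact this
  | mul_X p i hp =>
    have h2 : HasDerivAt (fun s : ℝ => u i + s * (x i - u i)) (x i - u i) s := by
      simpa using ((hasDerivAt_id s).mul_const (x i - u i)).const_add (u i)
    have := hp.mul h2
    simp only [_root_.map_mul, MvPolynomial.eval_X] at this ⊢
    refine this.congr_deriv ?_
    symm
    have key : ∀ j : Fin n,
        (MvPolynomial.eval fun j => u j + s * (x j - u j))
          ((MvPolynomial.pderiv j) (p * MvPolynomial.X i)) * (x j - u j)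
        = (MvPolynomial.eval fun j => u j + s * (x j - u j)) ((MvPolynomial.pderiv j) p)
            * (x j - u j) * (u i + s * (x i - u i))
          + (if j = i then (MvPolynomial.eval fun j => u j + s * (x j - u j)) p * (x j - u j)
              else 0) := by
      intro j
      rw [MvPolynomial.pderiv_mul, MvPolynomial.pderiv_X]
      rcases eq_or_ne j i with hji | hji
      · subst hji
        simp only [Pi.single_apply, if_pos rfl, map_add, _root_.map_mul, MvPolynomial.eval_X]
        simp
        ring
      · simp [Pi.single_apply, hji, fun hh : i = j => hji hh.symm]
        ring
    rw [Finset.sum_congr rfl (fun j _ => key j), Finset.sum_add_distrib,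
      Finset.sum_ite_eq' Finset.univ i
        (fun j => (MvPolynomial.eval fun j => u j + s * (x j - u j)) p * (x j - u j))]
    simp only [Finset.mem_univ, if_true, ← Finset.sum_mul]

/-! ### continuity facts -/

lemma contQ {n : ℕ} (p : MvPolynomial (Fin n) ℝ) :
    Continuous (fun yv : (Fin n → ℝ) × (Fin n → ℝ) => yv.2 ⬝ᵥ (hessEval p yv.1) *ᵥ yv.2) := by
  unfold hessEval dotProduct Matrix.mulVec
  simp only [Matrix.of_apply]
  apply continuous_finset_sum
  intro a _
  apply Continuous.mul
  · exact (continuous_apply a).comp continuous_snd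
  · change Continuous fun yv : (Fin n → ℝ) × (Fin n → ℝ) =>
      ∑ b, (eval yv.1 (pderiv a (pderiv b p))) * yv.2 b
    apply continuous_finset_sum
    intro b _
    exact ((MvPolynomial.continuous_eval (pderiv a (pderiv b p))).comp continuous_fst).mul
      ((continuous_apply b).comp continuous_snd)

lemma contW {n : ℕ} (p : MvPolynomial (Fin n) ℝ) :
    Continuous (fun yv : (Fin n → ℝ) × (Fin n → ℝ) => (gradEval p yv.1 ⬝ᵥ yv.2)^2) := by
  apply Continuous.pow
  unfold gradEval dotProduct
  apply continuous_finset_sum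
  intro a _
  exact ((MvPolynomial.continuous_eval (pderiv a p)).comp continuous_fst).mul
    ((continuous_apply a).comp continuous_snd)

/-! ### key compactness estimate -/

lemma key_estimate {n m : ℕ} (g : Fin m → MvPolynomial (Fin n) ℝ) (C : Set (Fin n → ℝ))
    (hCS : C ⊆ SolSet g) (hC : IsCompact C)
    (hqc : ∀ i, ∀ x ∈ C ∩ ZSet (g i), StrictlyQuasiconcaveAt (g i) x)
    (hCne : C.Nonempty) (hn : 0 < n) (i : Fin m) :
    ∃ m0 : ℝ, 0 < m0 ∧ ∀ y ∈ C, ∀ v : Fin n → ℝ, ‖v‖ = 1 →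
      eval y (g i) ≤ m0/2 →
      (m0 ≤ -(v ⬝ᵥ (hessEval (g i) y) *ᵥ v) ∨ m0 ≤ (gradEval (g i) y ⬝ᵥ v)^2) := by
  classical
  set S : Set (Fin n → ℝ) := Metric.sphere 0 1 with hS
  have hSne : S.Nonempty := by
    refine ⟨Pi.single ⟨0, hn⟩ 1, ?_⟩
    rw [hS, mem_sphere_zero_iff_norm]
    rw [Pi.norm_single]; norm_num
  have hT : IsCompact (C ×ˢ S) := hC.prod (isCompact_sphere 0 1)
  have hTne : (C ×ˢ S).Nonempty := hCne.prod hSne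
  set F : (Fin n → ℝ) × (Fin n → ℝ) → ℝ := fun p =>
    max (max (-(p.2 ⬝ᵥ (hessEval (g i) p.1) *ᵥ p.2)) ((gradEval (g i) p.1 ⬝ᵥ p.2)^2))
      (eval p.1 (g i)) with hF
  have hFcont : Continuous F := by
    apply Continuous.max
    apply Continuous.max
    · exact (contQ (g i)).neg
    · exact contW (g i)
    · exact (MvPolynomial.continuous_eval (g i)).comp continuous_fst
  obtain ⟨p₀, hp₀, hmin⟩ := hT.exists_isMinOn hTne hFcont.continuousOn
  have hp₀C : p₀.1 ∈ C := (Set.mem_prod.1 hp₀).1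
  have hp₀S : ‖p₀.2‖ = 1 := by
    have := (Set.mem_prod.1 hp₀).2
    rwa [hS, mem_sphere_zero_iff_norm] at this
  have hFpos : 0 < F p₀ := by
    rw [hF]
    rcases lt_or_ge 0 (eval p₀.1 (g i)) with hpos | hle
    · exact lt_of_lt_of_le hpos (le_max_right _ _)
    · have h0 : eval p₀.1 (g i) = 0 := le_antisymm hle (hCS hp₀C i)
      have hz : p₀.1 ∈ C ∩ ZSet (g i) := ⟨hp₀C, h0⟩
      have hvne : p₀.2 ≠ 0 := by
        intro hv0
        rw [hv0] at hp₀S; simp at hp₀S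
      rcases eq_or_ne (gradEval (g i) p₀.1 ⬝ᵥ p₀.2) 0 with hw | hw
      · have := hqc i p₀.1 hz p₀.2 hvne hw
        have h1 : (0:ℝ) < -(p₀.2 ⬝ᵥ (hessEval (g i) p₀.1) *ᵥ p₀.2) := by linarith
        exact lt_of_lt_of_le h1 ((le_max_left _ _).trans (le_max_left _ _))
      · have h1 : (0:ℝ) < (gradEval (g i) p₀.1 ⬝ᵥ p₀.2)^2 := by positivity
        exact lt_of_lt_of_le h1 ((le_max_right _ _).trans (le_max_left _ _))
  refine ⟨F p₀, hFpos, ?_⟩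
  intro y hy v hv hsmall
  have hmem : (y, v) ∈ C ×ˢ S := by
    refine Set.mem_prod.2 ⟨hy, ?_⟩
    rw [hS, mem_sphere_zero_iff_norm]; exact hv
  have hge : F p₀ ≤ F (y, v) := hmin hmem
  rw [hF] at hge
  simp only at hge
  rcases le_max_iff.1 hge with h1 | h2
  · rcases le_max_iff.1 h1 with h3 | h4
    · exact Or.inl h3
    · exact Or.inr h4
  · exfalso
    linarith [hsmall, h2, hFpos]

end Aux

set_option maxHeartbeats 2000000 in
theorem stmt_12 {n m : ℕ} (g : Fin m → MvPolynomial (Fin n) ℝ)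
    (C : Set (Fin n → ℝ)) (hCS : C ⊆ SolSet g) (hC : IsCompact C)
    (hqc : ∀ i, ∀ x ∈ C ∩ ZSet (g i), StrictlyQuasiconcaveAt (g i) x) :
    ∃ h : Polynomial ℝ, IsSOS1 (h - 1) ∧
      ∀ i : Fin m, ∀ u x : Fin n → ℝ, u ∈ ZSet (g i) →
        (∀ s ∈ Set.Icc (0:ℝ) 1, (fun j => u j + s * (x j - u j)) ∈ C) →
        ∀ v : Fin n → ℝ, v ≠ 0 →
          v ⬝ᵥ (Matrix.of fun a b =>
              ∫ s in (0:ℝ)..1,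
                eval (fun j => u j + s * (x j - u j))
                  (pderiv a (pderiv b (g i * Polynomial.aeval (g i) h)))) *ᵥ v < 0 := by
  classical
  have hSOS1 : IsSOS1 ((1:Polynomial ℝ) - 1) := by simpa using isSOS1_zero
  rcases Nat.eq_zero_or_pos n with hn0 | hn
  · subst hn0
    exact ⟨1, hSOS1, fun i u x _ _ v hv => absurd (funext fun j => j.elim0) hv⟩
  rcases C.eq_empty_or_nonempty with hCe | hCne
  · refine ⟨1, hSOS1, fun i u x _ hseg v _ => ?_⟩
    have h0 := hseg 0 (by norm_num)
    rw [hCe] at h0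
    exact absurd h0 (Set.notMem_empty _)
  rcases Nat.eq_zero_or_pos m with hm0 | hm
  · subst hm0
    exact ⟨1, hSOS1, fun i => i.elim0⟩
  -- constants
  choose m0f hm0fpos hkeyf using key_estimate g C hCS hC hqc hCne hn
  have hQb : ∀ i : Fin m, ∃ b : ℝ, 0 ≤ b ∧ ∀ y ∈ C, ∀ v : Fin n → ℝ, ‖v‖ = 1 →
      |v ⬝ᵥ (hessEval (g i) y) *ᵥ v| ≤ b := by
    intro i
    obtain ⟨b, hb⟩ := (hC.prod (isCompact_sphere (0 : Fin n → ℝ) 1)).exists_bound_of_continuousOn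
      (contQ (g i)).continuousOn
    refine ⟨max b 0, le_max_right _ _, fun y hy v hv => ?_⟩
    have := hb (y, v) (Set.mem_prod.2 ⟨hy, by rwa [mem_sphere_zero_iff_norm]⟩)
    rw [Real.norm_eq_abs] at this
    exact this.trans (le_max_left _ _)
  choose Bf hBf0 hBf using hQb
  have hDb : ∀ i : Fin m, ∃ b : ℝ, 0 ≤ b ∧ ∀ y ∈ C, ∀ z ∈ C, ∀ w ∈ C,
      |∑ j, eval y (pderiv j (g i)) * (z j - w j)| ≤ b := by
    intro i
    have hcont : Continuous (fun p : (Fin n → ℝ) × ((Fin n → ℝ) × (Fin n → ℝ)) =>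
        ∑ j, eval p.1 (pderiv j (g i)) * (p.2.1 j - p.2.2 j)) := by
      apply continuous_finset_sum
      intro j _
      exact ((MvPolynomial.continuous_eval (pderiv j (g i))).comp continuous_fst).mul
        (((continuous_apply j).comp (continuous_fst.comp continuous_snd)).sub
         ((continuous_apply j).comp (continuous_snd.comp continuous_snd)))
    obtain ⟨b, hb⟩ := (hC.prod (hC.prod hC)).exists_bound_of_continuousOn hcont.continuousOn
    refine ⟨max b 0, le_max_right _ _, fun y hy z hz w hw => ?_⟩
    have := hb (y, z, w) (Set.mem_prod.2 ⟨hy, Set.mem_prod.2 ⟨hz, hw⟩⟩)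
    rw [Real.norm_eq_abs] at this
    exact this.trans (le_max_left _ _)
  choose Df hDf0 hDf using hDb
  have hMb : ∀ i : Fin m, ∃ b : ℝ, 0 ≤ b ∧ ∀ y ∈ C, eval y (g i) ≤ b := by
    intro i
    obtain ⟨b, hb⟩ := hC.exists_bound_of_continuousOn
      (MvPolynomial.continuous_eval (g i)).continuousOn
    refine ⟨max b 0, le_max_right _ _, fun y hy => ?_⟩
    have := hb y hy
    rw [Real.norm_eq_abs] at this
    exact ((le_abs_self _).trans this).trans (le_max_left _ _)
  choose MGf hMGf0 hMGf using hMb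
  have hfinne : (Finset.univ : Finset (Fin m)).Nonempty := by
    haveI := Fin.pos_iff_nonempty.mp hm
    exact Finset.univ_nonempty
  set m0 : ℝ := Finset.univ.inf' hfinne m0f with hm0def
  set B : ℝ := Finset.univ.sup' hfinne Bf with hBdef
  set D : ℝ := Finset.univ.sup' hfinne Df with hDdef
  set MG : ℝ := Finset.univ.sup' hfinne MGf with hMGdef
  have hm0pos : 0 < m0 := by
    rw [hm0def, Finset.lt_inf'_iff]; exact fun i _ => hm0fpos i
  have hm0le : ∀ i, m0 ≤ m0f i := fun i => Finset.inf'_le _ (Finset.mem_univ i)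
  have hBle : ∀ i, Bf i ≤ B := fun i => Finset.le_sup' _ (Finset.mem_univ i)
  have hDle : ∀ i, Df i ≤ D := fun i => Finset.le_sup' _ (Finset.mem_univ i)
  have hMGle : ∀ i, MGf i ≤ MG := fun i => Finset.le_sup' _ (Finset.mem_univ i)
  have hB0 : 0 ≤ B := le_trans (hBf0 ⟨0, hm⟩) (hBle _)
  have hD0 : 0 ≤ D := le_trans (hDf0 ⟨0, hm⟩) (hDle _)
  have hMG0 : 0 ≤ MG := le_trans (hMGf0 ⟨0, hm⟩) (hMGle _)
  set δ : ℝ := m0/2 with hδdef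
  set ε : ℝ := m0/2 with hεdef
  set c₀ : ℝ := (B + m0)/m0 with hc₀def
  set FD : ℝ := D + 1 with hFDdef
  set s₀ : ℝ := min 1 ((δ/2)/FD) with hs₀def
  set η : ℝ := ε*s₀/(2*(B+1)) with hηdef
  set M : ℝ := MG + δ + 1 with hMdef
  have hδpos : 0 < δ := by rw [hδdef]; linarith
  have hεpos : 0 < ε := by rw [hεdef]; linarith
  have hc₀pos : 0 < c₀ := by rw [hc₀def]; positivity
  have hFDpos : 0 < FD := by rw [hFDdef]; linarith
  have hs₀pos : 0 < s₀ := by rw [hs₀def]; positivity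
  have hs₀le1 : s₀ ≤ 1 := min_le_left _ _
  have hηpos : 0 < η := by rw [hηdef]; positivity
  have hδM : δ < M := by rw [hMdef]; linarith
  obtain ⟨r, K, hr1, hK0, hMK, hcK, hPlow, hPhigh⟩ := exists_params δ c₀ η M hδpos hc₀pos hηpos hδM
  refine ⟨hpol K r, ?_, ?_⟩
  · have hh : hpol K r - 1 = Polynomial.C (1/((r:ℝ)+1)) + SP K r := by rw [hpol]; ring
    rw [hh]
    exact isSOS1_add (isSOS1_C_nonneg (by positivity)) (isSOS1_SP K r)

  intro i u x hu hseg v hv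
  set P1 : Polynomial ℝ := Polynomial.derivative (Polynomial.X * hpol K r) with hP1def
  set P2 : Polynomial ℝ := Polynomial.derivative P1 with hP2def
  set Mm : Matrix (Fin n) (Fin n) ℝ := Matrix.of (fun a b =>
    ∫ s in (0:ℝ)..1, eval (fun j => u j + s * (x j - u j))
      (pderiv a (pderiv b (g i * Polynomial.aeval (g i) (hpol K r))))) with hMmdef
  have hγc : Continuous (fun s : ℝ => (fun j => u j + s * (x j - u j) : Fin n → ℝ)) := by
    apply continuous_pi
    intro j
    exact continuous_const.add (continuous_id.mul continuous_const)
  have hecont : ∀ q : MvPolynomial (Fin n) ℝ,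
      Continuous (fun s : ℝ => eval (fun j => u j + s * (x j - u j)) q) :=
    fun q => (MvPolynomial.continuous_eval q).comp hγc
  have huC : u ∈ C := by
    have h0 := hseg 0 ⟨le_refl 0, zero_le_one⟩
    simpa using h0
  have hxC : x ∈ C := by
    have h1 := hseg 1 ⟨zero_le_one, le_refl 1⟩
    simpa using h1
  have hMGM : MG < M := by rw [hMdef]; linarith
  -- the key claim for unit vectors
  suffices hcore : ∀ w : Fin n → ℝ, ‖w‖ = 1 → w ⬝ᵥ Mm *ᵥ w < 0 by
    have h1 := hcore (‖v‖⁻¹ • v) (norm_smul_inv_norm (𝕜 := ℝ) hv)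
    have h2 : (‖v‖⁻¹ • v) ⬝ᵥ Mm *ᵥ (‖v‖⁻¹ • v) = ‖v‖⁻¹ * (‖v‖⁻¹ * (v ⬝ᵥ Mm *ᵥ v)) := by
      rw [Matrix.mulVec_smul, smul_dotProduct, dotProduct_smul]
      simp [smul_eq_mul]
    rw [h2] at h1
    have hvn : (0:ℝ) < ‖v‖⁻¹ := by
      have := norm_pos_iff.mpr hv
      positivity
    by_contra hX
    push_neg at hX
    nlinarith [mul_nonneg hvn.le (mul_nonneg hvn.le hX)]
  intro w hw
  -- scalar functions along the segment
  set E : ℝ → ℝ := fun s => eval (fun j => u j + s * (x j - u j)) (g i) with hEdef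
  set SG : ℝ → ℝ := fun s =>
    ∑ a, eval (fun j => u j + s * (x j - u j)) (pderiv a (g i)) * w a with hSGdef
  set QH : ℝ → ℝ := fun s =>
    ∑ a, w a * ∑ b, eval (fun j => u j + s * (x j - u j)) (pderiv a (pderiv b (g i))) * w b
    with hQHdef
  set J : ℝ → ℝ := fun s =>
    Polynomial.eval (E s) P2 * (SG s)^2 + Polynomial.eval (E s) P1 * QH s with hJdef
  have hQHeq : ∀ s : ℝ, QH s
      = w ⬝ᵥ (hessEval (g i) (fun j => u j + s * (x j - u j))) *ᵥ w := by
    intro s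
    simp [hQHdef, hessEval, Matrix.mulVec, dotProduct]
  have hSGeq : ∀ s : ℝ, SG s
      = gradEval (g i) (fun j => u j + s * (x j - u j)) ⬝ᵥ w := by
    intro s
    simp [hSGdef, gradEval, dotProduct]
  -- basic bounds on E
  have hE0 : E 0 = 0 := by
    rw [hEdef]
    simp only [zero_mul, add_zero]
    exact hu
  have hEnn : ∀ s ∈ Set.Icc (0:ℝ) 1, 0 ≤ E s := fun s hs => hCS (hseg s hs) i
  have hEM : ∀ s ∈ Set.Icc (0:ℝ) 1, E s ≤ MG :=
    fun s hs => (hMGf i _ (hseg s hs)).trans (hMGle i)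
  have hEsmall : ∀ s ∈ Set.Icc (0:ℝ) s₀, E s ≤ δ/2 := by
    intro s hs
    have hs01 : s ∈ Set.Icc (0:ℝ) 1 := ⟨hs.1, hs.2.trans hs₀le1⟩
    have hFTC : (∫ σ in (0:ℝ)..s, (∑ j, eval (fun j' => u j' + σ * (x j' - u j'))
          (pderiv j (g i)) * (x j - u j))) = E s - E 0 := by
      apply intervalIntegral.integral_eq_sub_of_hasDerivAt
      · intro σ _
        exact hasDerivAt_eval_line (g i) u x σ
      · apply Continuous.intervalIntegrable
        apply continuous_finset_sum
        intro j _
        exact (hecont (pderiv j (g i))).mul continuous_const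
    have hbound : ‖∫ σ in (0:ℝ)..s, (∑ j, eval (fun j' => u j' + σ * (x j' - u j'))
          (pderiv j (g i)) * (x j - u j))‖ ≤ FD * |s - 0| := by
      apply intervalIntegral.norm_integral_le_of_norm_le_const
      intro σ hσ
      rw [Set.uIoc_of_le hs.1] at hσ
      have hσ' : σ ∈ Set.Icc (0:ℝ) 1 := ⟨hσ.1.le, hσ.2.trans hs01.2⟩
      rw [Real.norm_eq_abs]
      exact (hDf i _ (hseg σ hσ') x hxC u huC).trans ((hDle i).trans (by rw [hFDdef]; linarith))
    rw [hFTC, hE0, sub_zero, Real.norm_eq_abs, sub_zero, abs_of_nonneg hs.1] at hbound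
    have h1 : E s ≤ FD * s := (le_abs_self _).trans hbound
    have h2 : FD * s ≤ FD * ((δ/2)/FD) := by
      apply mul_le_mul_of_nonneg_left _ hFDpos.le
      exact hs.2.trans (min_le_right _ _)
    have h3 : FD * ((δ/2)/FD) = δ/2 := by field_simp
    exact h1.trans (h2.trans_eq h3)
  -- polynomial derivative facts
  have hφfacts : ∀ t : ℝ, 0 ≤ t → t ≤ MG →
      0 ≤ Polynomial.eval t P1 ∧ Polynomial.eval t P2 ≤ 0 ∧
        c₀ * Polynomial.eval t P1 + Polynomial.eval t P2 ≤ 0 := by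
    intro t ht0 htM
    have htK : t < K := lt_of_le_of_lt (htM.trans hMGM.le) hMK
    have hst0 : 0 ≤ 1 - t/K := by
      have : t/K ≤ 1 := by rw [div_le_one hK0]; linarith
      linarith
    have hst1 : 1 - t/K ≤ 1 := by
      have : 0 ≤ t/K := div_nonneg ht0 hK0.le
      linarith
    have hE1 : Polynomial.eval t P1 = 2*(2*(r:ℝ)+1) * (1 - t/K)^(2*r) := by
      rw [hP1def]; exact evalD1 hK0.ne' r t
    have hE2 : Polynomial.eval t P2
        = -(2*(2*(r:ℝ)+1)) * (2*(r:ℝ)) * (1 - t/K)^(2*r-1) / K := by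
      rw [hP2def, hP1def]; exact evalD2 hK0.ne' r hr1 t
    have hpw : (0:ℝ) ≤ (1-t/K)^(2*r-1) := pow_nonneg hst0 _
    have hr0 : (0:ℝ) < (r:ℝ) := by
      have : (1:ℝ) ≤ (r:ℝ) := by exact_mod_cast hr1
      linarith
    have hφ1nn : 0 ≤ Polynomial.eval t P1 := by rw [hE1]; positivity
    refine ⟨hφ1nn, ?_, ?_⟩
    · rw [hE2]
      rw [show -(2*(2*(r:ℝ)+1)) * (2*(r:ℝ)) * (1-t/K)^(2*r-1) / K
          = -(2*(2*(r:ℝ)+1) * (2*(r:ℝ)) * (1-t/K)^(2*r-1) / K) from by ring]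
      exact neg_nonpos.mpr (by positivity)
    · have hsplit : (1-t/K)^(2*r) = (1-t/K)^(2*r-1) * (1-t/K) := by
        conv_lhs => rw [show 2*r = (2*r - 1) + 1 from by omega]
        rw [pow_succ]
      have hcc : (2*(r:ℝ)/K) * Polynomial.eval t P1 + Polynomial.eval t P2 ≤ 0 := by
        rw [hE1, hE2, hsplit]
        have key : (2*(r:ℝ)/K) * (2*(2*(r:ℝ)+1) * ((1-t/K)^(2*r-1) * (1-t/K)))
              + (-(2*(2*(r:ℝ)+1)) * (2*(r:ℝ)) * (1-t/K)^(2*r-1) / K)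
            = (2*(r:ℝ)*(2*(2*(r:ℝ)+1))*(1-t/K)^(2*r-1)/K) * ((1-t/K) - 1) := by
          field_simp
          ring
        rw [key]
        apply mul_nonpos_of_nonneg_of_nonpos
        · positivity
        · linarith
      nlinarith [mul_le_mul_of_nonneg_right hcK hφ1nn]
  -- quasiconcavity estimate
  have hQC : ∀ s ∈ Set.Icc (0:ℝ) 1, E s ≤ δ → QH s ≤ c₀ * (SG s)^2 - ε := by
    intro s hs ht
    have hm0half : E s ≤ m0f i / 2 := by
      have := hm0le i
      rw [hδdef] at ht
      linarith
    have hkey := hkeyf i _ (hseg s hs) w hw hm0half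
    rw [← hQHeq, ← hSGeq] at hkey
    have hWs0 : 0 ≤ (SG s)^2 := sq_nonneg _
    rcases hkey with hk1 | hk2
    · have hQle : QH s ≤ -m0 := by linarith [hm0le i]
      have : 0 ≤ c₀ * (SG s)^2 := mul_nonneg hc₀pos.le hWs0
      rw [hεdef]
      linarith
    · have hQB : QH s ≤ B := by
        have h1 := hBf i _ (hseg s hs) w hw
        rw [← hQHeq] at h1
        have := abs_le.1 h1
        linarith [hBle i]
      have hWsm0 : m0 ≤ (SG s)^2 := le_trans (hm0le i) hk2
      have h2 : c₀ * m0 = B + m0 := by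
        rw [hc₀def]; field_simp
      have h3 : c₀ * m0 ≤ c₀ * (SG s)^2 := mul_le_mul_of_nonneg_left hWsm0 hc₀pos.le
      rw [hεdef]
      linarith
  -- pointwise bounds on J
  have hnear : ∀ s ∈ Set.Icc (0:ℝ) s₀, J s ≤ -ε := by
    intro s hs
    have hs01 : s ∈ Set.Icc (0:ℝ) 1 := ⟨hs.1, hs.2.trans hs₀le1⟩
    obtain ⟨hφ1, hφ2, hφ3⟩ := hφfacts (E s) (hEnn s hs01) (hEM s hs01)
    have hδ2 : E s ≤ δ/2 := hEsmall s hs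
    have hφ'1 : 1 ≤ Polynomial.eval (E s) P1 := by
      have := hPlow (E s) ⟨hEnn s hs01, hδ2⟩
      rw [hP1def, evalD1 hK0.ne' r]
      exact this
    have hQs := hQC s hs01 (by linarith)
    have hmm := mul_le_mul_of_nonneg_left hQs hφ1
    rw [hJdef]
    simp only
    nlinarith [mul_nonpos_of_nonneg_of_nonpos (sq_nonneg (SG s)) hφ3,
      mul_le_mul_of_nonneg_left hφ'1 hεpos.le]
  have hfar : ∀ s ∈ Set.Icc s₀ (1:ℝ), J s ≤ ε*s₀/2 := by
    intro s hs
    have hs01 : s ∈ Set.Icc (0:ℝ) 1 := ⟨hs₀pos.le.trans hs.1, hs.2⟩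
    obtain ⟨hφ1, hφ2, hφ3⟩ := hφfacts (E s) (hEnn s hs01) (hEM s hs01)
    have hWs0 : 0 ≤ (SG s)^2 := sq_nonneg _
    have hP2W : Polynomial.eval (E s) P2 * (SG s)^2 ≤ 0 :=
      mul_nonpos_of_nonpos_of_nonneg hφ2 hWs0
    rcases le_or_gt (E s) δ with hcase | hcase
    · have hQs := hQC s hs01 hcase
      have hmm := mul_le_mul_of_nonneg_left hQs hφ1
      rw [hJdef]
      simp only
      nlinarith [mul_nonpos_of_nonneg_of_nonpos hWs0 hφ3,
        mul_nonneg hεpos.le hφ1, mul_nonneg (mul_nonneg hεpos.le hs₀pos.le) (by norm_num : (0:ℝ) ≤ 1/2)]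
    · have hφη : Polynomial.eval (E s) P1 ≤ η := by
        have := hPhigh (E s) ⟨hcase.le, (hEM s hs01).trans hMGM.le⟩
        rw [hP1def, evalD1 hK0.ne' r]
        exact this
      have hQB : QH s ≤ B := by
        have h1 := hBf i _ (hseg s hs01) w hw
        rw [← hQHeq] at h1
        have := abs_le.1 h1
        linarith [hBle i]
      have hPQ : Polynomial.eval (E s) P1 * QH s ≤ η * B := by
        calc Polynomial.eval (E s) P1 * QH s
            ≤ Polynomial.eval (E s) P1 * B := mul_le_mul_of_nonneg_left hQB hφ1
        _ ≤ η * B := mul_le_mul_of_nonneg_right hφη hB0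
      have hηB : η * B ≤ ε*s₀/2 := by
        rw [hηdef, div_mul_eq_mul_div, div_le_div_iff₀ (by positivity) (by norm_num : (0:ℝ) < 2)]
        nlinarith [mul_nonneg (mul_nonneg hεpos.le hs₀pos.le) hB0]
      rw [hJdef]
      simp only
      linarith
  -- continuity and integrability
  have hJcont : Continuous J := by
    rw [hJdef]
    apply Continuous.add
    · apply Continuous.mul
      · exact (Polynomial.continuous P2).comp (hecont (g i))
      · apply Continuous.pow
        apply continuous_finset_sum
        intro a _
        exact (hecont (pderiv a (g i))).mul continuous_const
    · apply Continuous.mul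
      · exact (Polynomial.continuous P1).comp (hecont (g i))
      · apply continuous_finset_sum
        intro a _
        apply Continuous.mul continuous_const
        apply continuous_finset_sum
        intro b _
        exact (hecont (pderiv a (pderiv b (g i)))).mul continuous_const
  -- the quadratic form as a single integral
  have hQint : w ⬝ᵥ Mm *ᵥ w = ∫ s in (0:ℝ)..1, J s := by
    have hstep1 : ∀ a : Fin n, (Mm *ᵥ w) a
        = ∫ s in (0:ℝ)..1, (∑ b, eval (fun j => u j + s * (x j - u j))
            (pderiv a (pderiv b (g i * Polynomial.aeval (g i) (hpol K r)))) * w b) := by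
      intro a
      show (∑ b, Mm a b * w b) = _
      calc (∑ b, Mm a b * w b)
          = ∑ b, ∫ s in (0:ℝ)..1, (eval (fun j => u j + s * (x j - u j))
              (pderiv a (pderiv b (g i * Polynomial.aeval (g i) (hpol K r)))) * w b) := by
            apply Finset.sum_congr rfl
            intro b _
            rw [hMmdef]
            simp only [Matrix.of_apply]
            rw [← intervalIntegral.integral_mul_const]
      _ = _ := (intervalIntegral.integral_finset_sum (fun b _ =>
            ((hecont _).mul continuous_const).intervalIntegrable 0 1)).symm
    have hstep2 : w ⬝ᵥ Mm *ᵥ w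
        = ∫ s in (0:ℝ)..1, (∑ a, w a * (∑ b, eval (fun j => u j + s * (x j - u j))
            (pderiv a (pderiv b (g i * Polynomial.aeval (g i) (hpol K r)))) * w b)) := by
      show (∑ a, w a * (Mm *ᵥ w) a) = _
      calc (∑ a, w a * (Mm *ᵥ w) a)
          = ∑ a, ∫ s in (0:ℝ)..1, (w a * ∑ b, eval (fun j => u j + s * (x j - u j))
              (pderiv a (pderiv b (g i * Polynomial.aeval (g i) (hpol K r)))) * w b) := by
            apply Finset.sum_congr rfl
            intro a _
            rw [hstep1 a, ← intervalIntegral.integral_const_mul]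
      _ = _ := (intervalIntegral.integral_finset_sum (fun a _ => by
            apply Continuous.intervalIntegrable
            apply Continuous.mul continuous_const
            apply continuous_finset_sum
            intro b _
            exact (hecont _).mul continuous_const)).symm
    rw [hstep2]
    apply intervalIntegral.integral_congr
    intro s _
    -- pointwise identity
    have hpoint : ∀ a b : Fin n, eval (fun j => u j + s * (x j - u j))
          (pderiv a (pderiv b (g i * Polynomial.aeval (g i) (hpol K r))))
        = Polynomial.eval (E s) P2 * (eval (fun j => u j + s * (x j - u j)) (pderiv a (g i)))
            * (eval (fun j => u j + s * (x j - u j)) (pderiv b (g i)))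
          + Polynomial.eval (E s) P1
            * (eval (fun j => u j + s * (x j - u j)) (pderiv a (pderiv b (g i)))) := by
      intro a b
      rw [show g i * Polynomial.aeval (g i) (hpol K r)
          = Polynomial.aeval (g i) (Polynomial.X * hpol K r) from by
        rw [_root_.map_mul, Polynomial.aeval_X]]
      rw [hess_identity]
      simp only [map_add, _root_.map_mul]
      rw [eval_paeval, eval_paeval]
    have expand : ∀ a : Fin n, (∑ b, eval (fun j => u j + s * (x j - u j))
          (pderiv a (pderiv b (g i * Polynomial.aeval (g i) (hpol K r)))) * w b)
        = Polynomial.eval (E s) P2 * (eval (fun j => u j + s * (x j - u j)) (pderiv a (g i)))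
            * SG s
          + Polynomial.eval (E s) P1 * (∑ b, eval (fun j => u j + s * (x j - u j))
              (pderiv a (pderiv b (g i))) * w b) := by
      intro a
      rw [hSGdef]
      simp only
      rw [Finset.mul_sum, Finset.mul_sum, ← Finset.sum_add_distrib]
      apply Finset.sum_congr rfl
      intro b _
      rw [hpoint a b]
      ring
    calc (∑ a, w a * (∑ b, eval (fun j => u j + s * (x j - u j))
          (pderiv a (pderiv b (g i * Polynomial.aeval (g i) (hpol K r)))) * w b))
        = ∑ a, (Polynomial.eval (E s) P2 * ((eval (fun j => u j + s * (x j - u j))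
            (pderiv a (g i)) * w a) * SG s)
          + Polynomial.eval (E s) P1 * (w a * ∑ b, eval (fun j => u j + s * (x j - u j))
              (pderiv a (pderiv b (g i))) * w b)) := by
          apply Finset.sum_congr rfl
          intro a _
          rw [expand a]
          ring
    _ = (∑ a, Polynomial.eval (E s) P2 * ((eval (fun j => u j + s * (x j - u j))
            (pderiv a (g i)) * w a) * SG s))
          + ∑ a, Polynomial.eval (E s) P1 * (w a * ∑ b, eval (fun j => u j + s * (x j - u j))
              (pderiv a (pderiv b (g i))) * w b) := Finset.sum_add_distrib
    _ = Polynomial.eval (E s) P2 * ((∑ a, eval (fun j => u j + s * (x j - u j))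
            (pderiv a (g i)) * w a) * SG s)
          + Polynomial.eval (E s) P1 * (∑ a, w a * ∑ b, eval (fun j => u j + s * (x j - u j))
              (pderiv a (pderiv b (g i))) * w b) := by
        rw [← Finset.mul_sum, ← Finset.mul_sum, ← Finset.sum_mul]
    _ = J s := by
        rw [hJdef, hQHdef, hSGdef]
        simp only
        rw [sq]
  -- final integral estimate
  have hint1 : IntervalIntegrable J MeasureTheory.volume 0 s₀ := hJcont.intervalIntegrable _ _
  have hint2 : IntervalIntegrable J MeasureTheory.volume s₀ 1 := hJcont.intervalIntegrable _ _
  have hsplit : (∫ s in (0:ℝ)..1, J s) = (∫ s in (0:ℝ)..s₀, J s) + ∫ s in s₀..(1:ℝ), J s :=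
    (intervalIntegral.integral_add_adjacent_intervals hint1 hint2).symm
  have h1 : (∫ s in (0:ℝ)..s₀, J s) ≤ s₀ * (-ε) := by
    have := intervalIntegral.integral_mono_on hs₀pos.le hint1
      (intervalIntegrable_const (c := -ε)) hnear
    rwa [intervalIntegral.integral_const, sub_zero, smul_eq_mul] at this
  have h2 : (∫ s in s₀..(1:ℝ), J s) ≤ (1 - s₀) * (ε*s₀/2) := by
    have := intervalIntegral.integral_mono_on hs₀le1 hint2
      (intervalIntegrable_const (c := ε*s₀/2)) hfar
    rwa [intervalIntegral.integral_const, smul_eq_mul] at this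
  rw [hQint, hsplit]
  nlinarith [hs₀pos, hεpos, hs₀le1, mul_nonneg hεpos.le hs₀pos.le]
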